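/- For every complex number s with Re s > 1, the integral ∫_1^∞ S_0(t)·t^{−s−1} dt converges and s·∫_1^∞ S_0(t)·t^{−s−1} dt = −(1 + 2^{1−s})·ζ(2s)/ζ(s). -/

import Mathlib

open ArithmeticFunction
open scoped ArithmeticFunction.Omega

/-- `S₀ t = ∑_{n ≤ t} (-1)^{n-Ω(n)}`, the sum being over positive integers
`n ≤ t`, where `Ω n` is the number of prime factors of `n` counted with
multiplicity. -/
noncomputable def S0 (t : ℝ) : ℤ :=
  ∑ n ∈ Finset.Icc 1 ⌊t⌋₊, (-1 : ℤ) ^ (n - Ω n)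

open LSeries LSeries.notation MeasureTheory Set


noncomputable def lamAF : ArithmeticFunction ℂ :=
  ⟨fun n => if n = 0 then 0 else (-1) ^ (Ω n), rfl⟩

noncomputable def sqAF : ArithmeticFunction ℂ :=
  ⟨fun n => if IsSquare n ∧ n ≠ 0 then 1 else 0, by simp⟩

noncomputable def oneAF : ArithmeticFunction ℂ :=
  ⟨fun n => if n = 0 then 0 else 1, rfl⟩

lemma lamAF_apply (n : ℕ) : lamAF n = if n = 0 then 0 else (-1) ^ (Ω n) := rfl
lemma sqAF_apply (n : ℕ) : sqAF n = if IsSquare n ∧ n ≠ 0 then 1 else 0 := rfl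
lemma oneAF_apply (n : ℕ) : oneAF n = if n = 0 then 0 else 1 := rfl

lemma lamAF_mult : lamAF.IsMultiplicative := by
  refine ⟨by simp [lamAF_apply], ?_⟩
  intro m n _
  rcases eq_or_ne m 0 with rfl | hm
  · simp [lamAF_apply]
  rcases eq_or_ne n 0 with rfl | hn
  · simp [lamAF_apply]
  simp only [lamAF_apply, hm, hn, Nat.mul_ne_zero hm hn, if_neg, ite_false,
    cardFactors_mul hm hn, pow_add]

lemma oneAF_mult : oneAF.IsMultiplicative := by
  refine ⟨by simp [oneAF_apply], ?_⟩
  intro m n _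
  rcases eq_or_ne m 0 with rfl | hm
  · simp [oneAF_apply]
  rcases eq_or_ne n 0 with rfl | hn
  · simp [oneAF_apply]
  simp [oneAF_apply, hm, hn, Nat.mul_ne_zero hm hn]

lemma coprime_isSquare_mul {m n : ℕ} (hmn : Nat.Coprime m n) :
    IsSquare (m * n) ↔ IsSquare m ∧ IsSquare n := by
  constructor
  · rintro ⟨c, hc⟩
    have h2 : m * n = c ^ 2 := by rw [hc, sq]
    have hu : IsUnit (gcd m n) := by
      rw [Nat.isUnit_iff]; exact hmn
    have hu' : IsUnit (gcd n m) := by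
      rw [Nat.isUnit_iff]; exact hmn.symm
    obtain ⟨d, hd⟩ := exists_eq_pow_of_mul_eq_pow hu h2
    obtain ⟨e, he⟩ := exists_eq_pow_of_mul_eq_pow hu' (by rw [mul_comm]; exact h2)
    exact ⟨⟨d, by rw [hd, sq]⟩, ⟨e, by rw [he, sq]⟩⟩
  · rintro ⟨⟨a, ha⟩, ⟨b, hb⟩⟩
    exact ⟨a * b, by rw [ha, hb]; ring⟩

lemma sqAF_mult : sqAF.IsMultiplicative := by
  refine ⟨by simp [sqAF_apply], ?_⟩
  intro m n hmn
  rcases eq_or_ne m 0 with rfl | hm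
  · simp [sqAF_apply]
  rcases eq_or_ne n 0 with rfl | hn
  · simp [sqAF_apply]
  simp only [sqAF_apply, hm, hn, Nat.mul_ne_zero hm hn, ne_eq, not_false_eq_true, and_true,
    coprime_isSquare_mul hmn]
  by_cases h1 : IsSquare m <;> by_cases h2 : IsSquare n <;> simp [h1, h2]

lemma isSquare_prime_pow_iff {p k : ℕ} (hp : p.Prime) : IsSquare (p ^ k) ↔ Even k := by
  constructor
  · rintro ⟨c, hc⟩
    have hdvd : c ∣ p ^ k := ⟨c, hc⟩
    obtain ⟨j, hj, rfl⟩ := (Nat.dvd_prime_pow hp).mp hdvd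
    have : p ^ k = p ^ (2 * j) := by rw [hc]; ring
    have hk : k = 2 * j := Nat.pow_right_injective hp.two_le this
    exact ⟨j, by omega⟩
  · rintro ⟨j, rfl⟩
    exact ⟨p ^ j, by ring⟩

lemma lam_mul_one_eq_sq : lamAF * oneAF = sqAF := by
  refine (ArithmeticFunction.IsMultiplicative.eq_iff_eq_on_prime_powers _
    (lamAF_mult.mul oneAF_mult) _ sqAF_mult).mpr ?_
  intro p k hp
  rw [ArithmeticFunction.mul_apply, Nat.sum_divisorsAntidiagonal (f := fun x y => lamAF x * oneAF y),
    Nat.sum_divisors_prime_pow hp]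
  have : ∀ i ∈ Finset.range (k + 1), lamAF (p ^ i) * oneAF (p ^ k / p ^ i) = (-1 : ℂ) ^ i := by
    intro i hi
    rw [Finset.mem_range] at hi
    have h1 : (p : ℕ) ^ i ≠ 0 := pow_ne_zero _ hp.ne_zero
    have h2 : p ^ k / p ^ i ≠ 0 := by
      have := Nat.div_pos (Nat.le_of_dvd (pow_pos hp.pos k) (pow_dvd_pow p (by omega)))
        (Nat.pos_of_ne_zero h1)
      omega
    rw [lamAF_apply, oneAF_apply, if_neg h1, if_neg h2, cardFactors_apply_prime_pow hp, mul_one]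
  rw [Finset.sum_congr rfl this, neg_one_geom_sum, sqAF_apply]
  have h3 : (p : ℕ) ^ k ≠ 0 := pow_ne_zero _ hp.ne_zero
  simp only [isSquare_prime_pow_iff hp, h3, ne_eq, not_false_eq_true, and_true]
  rcases Nat.even_or_odd k with h | h
  · simp [h, Nat.even_add_one, Nat.not_even_iff_odd.mpr, h.add_one]
  · simp [Nat.not_even_iff_odd.mpr h, Nat.even_add_one, h.add_one]

noncomputable def aFun : ℕ → ℂ := fun n => if n = 0 then 0 else (-1) ^ (n - Ω n)

lemma cardFactors_le_self (n : ℕ) : Ω n ≤ n := by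
  induction n using Nat.strong_induction_on with
  | _ n ih =>
    rcases eq_or_ne n 0 with rfl | h0
    · simp
    rcases eq_or_ne n 1 with rfl | h1
    · simp
    obtain ⟨p, hp, m, rfl⟩ : ∃ p, p.Prime ∧ ∃ m, n = p * m := by
      obtain ⟨p, hp, hdvd⟩ := Nat.exists_prime_and_dvd h1
      exact ⟨p, hp, hdvd⟩
    have hm : m ≠ 0 := by rintro rfl; simp at h0
    have h2m : 2 * m ≤ p * m := Nat.mul_le_mul_right m hp.two_le
    have hmlt : m < p * m := by
      have := Nat.pos_of_ne_zero hm; omega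
    rw [cardFactors_mul hp.ne_zero hm, cardFactors_apply_prime hp]
    have := ih m hmlt
    omega

lemma aFun_eq (n : ℕ) (hn : n ≠ 0) : aFun n = (-1) ^ n * lamAF n := by
  rw [aFun, lamAF_apply, if_neg hn, if_neg hn]
  calc (-1 : ℂ) ^ (n - Ω n) = (-1) ^ (n - Ω n) * ((-1) ^ (Ω n) * (-1) ^ (Ω n)) := by
          rw [← pow_add, Even.neg_one_pow ⟨Ω n, rfl⟩, mul_one]
    _ = ((-1) ^ (n - Ω n) * (-1) ^ (Ω n)) * (-1) ^ (Ω n) := by ring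
    _ = (-1) ^ n * (-1) ^ (Ω n) := by
          rw [← pow_add, Nat.sub_add_cancel (cardFactors_le_self n)]

variable {s : ℂ}


lemma lamAF_summable (hs : 1 < s.re) : LSeriesSummable (↗lamAF) s := by
  refine LSeriesSummable_of_bounded_of_one_lt_re (m := 1) (fun n hn => ?_) hs
  rw [lamAF_apply, if_neg hn]
  simp

lemma oneAF_summable (hs : 1 < s.re) : LSeriesSummable (↗oneAF) s := by
  refine LSeriesSummable_of_bounded_of_one_lt_re (m := 1) (fun n hn => ?_) hs
  rw [oneAF_apply, if_neg hn]; simp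

lemma aFun_summable (hs : 1 < s.re) : LSeriesSummable aFun s := by
  refine LSeriesSummable_of_bounded_of_one_lt_re (m := 1) (fun n hn => ?_) hs
  rw [aFun, if_neg hn]; simp

lemma LSeries_oneAF_eq (hs : 1 < s.re) : LSeries (↗oneAF) s = riemannZeta s := by
  rw [LSeries_congr (f := ↗oneAF) (g := 1) (fun {n} hn => by simp only [Pi.one_apply]; rw [oneAF_apply, if_neg hn]) s]
  exact LSeries_one_eq_riemannZeta hs

lemma two_mul_re (hs : 1 < s.re) : 1 < (2 * s).re := by
  simp only [Complex.mul_re, Complex.re_ofNat, Complex.im_ofNat, zero_mul, sub_zero]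
  linarith

lemma LSeries_sqAF_eq (hs : 1 < s.re) : LSeries (↗sqAF) s = riemannZeta (2 * s) := by
  rw [← LSeries_one_eq_riemannZeta (two_mul_re hs)]
  unfold LSeries
  have hinj : Function.Injective (fun m : ℕ => m ^ 2) :=
    fun a b h => by nlinarith [sq_nonneg (a - b), sq_nonneg (b - a)]
  rw [← Function.Injective.tsum_eq (f := fun n => term (↗sqAF) s n) hinj ?_]
  · refine tsum_congr fun m => ?_
    rcases eq_or_ne m 0 with rfl | hm
    · simp [term_zero]
    have hm2 : m ^ 2 ≠ 0 := pow_ne_zero _ hm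
    rw [term_of_ne_zero hm2, term_of_ne_zero hm, sqAF_apply,
      if_pos ⟨⟨m, sq m⟩, hm2⟩, Pi.one_apply]
    congr 1
    rw [show ((m ^ 2 : ℕ) : ℂ) ^ s = ((m : ℂ) ^ (2 : ℕ)) ^ s by push_cast; rfl,
      ← Complex.natCast_cpow_natCast_mul]
    push_cast; ring_nf
  · intro n hn
    rcases eq_or_ne n 0 with rfl | hn0
    · exact ⟨0, by simp⟩
    by_contra hcon
    have hns : ¬ IsSquare n := by
      rintro ⟨r, hr⟩
      exact hcon ⟨r, by dsimp; rw [sq]; exact hr.symm⟩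
    apply hn
    dsimp only
    rw [term_of_ne_zero hn0, sqAF_apply, if_neg (by tauto), zero_div]

lemma LSeries_lamAF_eq (hs : 1 < s.re) :
    LSeries (↗lamAF) s = riemannZeta (2 * s) / riemannZeta s := by
  have h := ArithmeticFunction.LSeries_mul' (lamAF_summable hs) (oneAF_summable hs)
  rw [lam_mul_one_eq_sq, LSeries_sqAF_eq hs, LSeries_oneAF_eq hs] at h
  field_simp [riemannZeta_ne_zero_of_one_lt_re hs] at h ⊢
  linear_combination -h

lemma LSeries_aFun_eq (hs : 1 < s.re) :
    LSeries aFun s = -(1 + 2 ^ (1 - s)) * (riemannZeta (2 * s) / riemannZeta s) := by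
  have hF := lamAF_summable hs
  have hG := aFun_summable hs
  have key : LSeries aFun s + LSeries (↗lamAF) s = -(2 : ℂ) ^ (1 - s) * LSeries (↗lamAF) s := by
    rw [LSeries, LSeries, ← Summable.tsum_add hG hF]
    have hinj : Function.Injective (fun m : ℕ => 2 * m) := fun a b h => by dsimp at h; omega
    rw [← Function.Injective.tsum_eq
      (f := fun n => term aFun s n + term (↗lamAF) s n) hinj ?_]
    · have heach : ∀ m : ℕ, term aFun s (2 * m) + term (↗lamAF) s (2 * m) =
          (-(2 : ℂ) ^ (1 - s)) * term (↗lamAF) s m := by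
        intro m
        rcases eq_or_ne m 0 with rfl | hm
        · simp [term_zero]
        have h2m : 2 * m ≠ 0 := by omega
        rw [term_of_ne_zero h2m, term_of_ne_zero h2m, term_of_ne_zero hm,
          aFun_eq _ h2m, Even.neg_one_pow ⟨m, two_mul m⟩, one_mul]
        have hlam : lamAF (2 * m) = -lamAF m := by
          rw [show (2 * m : ℕ) = 2 * m from rfl, lamAF_apply, lamAF_apply, if_neg h2m, if_neg hm,
            cardFactors_mul two_ne_zero hm, cardFactors_apply_prime Nat.prime_two,
            pow_add, pow_one]
          ring
        rw [hlam]
        have hcast : ((2 * m : ℕ) : ℂ) ^ s = (2 : ℂ) ^ s * (m : ℂ) ^ s := by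
          rw [show ((2 * m : ℕ) : ℂ) = ((2 : ℕ) : ℂ) * ((m : ℕ) : ℂ) by push_cast; ring,
            Complex.natCast_mul_natCast_cpow]
          norm_num
        rw [hcast]
        have h2s : (2 : ℂ) ^ s ≠ 0 := by
          rw [Complex.cpow_def_of_ne_zero two_ne_zero]
          exact Complex.exp_ne_zero _
        have hexp : (2 : ℂ) ^ (1 - s) = 2 * ((2 : ℂ) ^ s)⁻¹ := by
          rw [Complex.cpow_sub _ _ two_ne_zero, Complex.cpow_one]
          ring
        rw [hexp]
        field_simp
        ring
      calc (∑' m, (term aFun s (2 * m) + term (↗lamAF) s (2 * m)))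
          = ∑' m, (-(2 : ℂ) ^ (1 - s)) * term (↗lamAF) s m := tsum_congr heach
        _ = -(2 : ℂ) ^ (1 - s) * LSeries (↗lamAF) s := by
            rw [tsum_mul_left]; rfl
    · intro n hn
      rcases eq_or_ne n 0 with rfl | hn0
      · exact ⟨0, by simp⟩
      rcases Nat.even_or_odd n with h | hodd
      · obtain ⟨k, hk⟩ := h; exact ⟨k, by dsimp; omega⟩
      exfalso
      apply hn
      dsimp only
      rw [term_of_ne_zero hn0, term_of_ne_zero hn0, aFun_eq _ hn0, Odd.neg_one_pow hodd]
      ring_nf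
  have hz := riemannZeta_ne_zero_of_one_lt_re hs
  have : LSeries aFun s = -(2 : ℂ) ^ (1 - s) * LSeries (↗lamAF) s - LSeries (↗lamAF) s := by
    linear_combination key
  rw [this, LSeries_lamAF_eq hs]
  ring


lemma aFun_norm_le (n : ℕ) : ‖aFun n‖ ≤ 1 := by
  rw [aFun]
  split <;> simp

lemma aFun_norm_eq {n : ℕ} (hn : n ≠ 0) : ‖aFun n‖ = 1 := by
  rw [aFun, if_neg hn]; simp

noncomputable def FF (s : ℂ) (n : ℕ) (t : ℝ) : ℂ :=
  Set.indicator (Set.Ioi ((n : ℝ))) (fun t => aFun n * (t : ℂ) ^ (-s - 1)) t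

lemma cpow_contOn : ContinuousOn (fun t : ℝ => (t : ℂ) ^ (-s - 1)) (Set.Ioi (0 : ℝ)) :=
  fun t ht => (Complex.continuousAt_ofReal_cpow_const t _ (Or.inr (ne_of_gt ht))).continuousWithinAt

lemma cpow_aesm {c : ℝ} (hc : 0 < c) :
    AEStronglyMeasurable (fun t : ℝ => (t : ℂ) ^ (-s - 1)) (volume.restrict (Set.Ioi c)) :=
  (cpow_contOn.mono (Set.Ioi_subset_Ioi hc.le)).aestronglyMeasurable measurableSet_Ioi

lemma norm_cpow_eq {t : ℝ} (ht : 0 < t) : ‖(t : ℂ) ^ (-s - 1)‖ = t ^ (-s.re - 1) := by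
  rw [Complex.norm_cpow_eq_rpow_re_of_pos ht]
  norm_num

lemma S0_norm_le {t : ℝ} (ht : 0 ≤ t) : ‖(S0 t : ℂ)‖ ≤ t := by
  have h1 : |S0 t| ≤ (⌊t⌋₊ : ℤ) := by
    rw [S0]
    calc |∑ n ∈ Finset.Icc 1 ⌊t⌋₊, (-1 : ℤ) ^ (n - Ω n)|
        ≤ ∑ n ∈ Finset.Icc 1 ⌊t⌋₊, |(-1 : ℤ) ^ (n - Ω n)| := Finset.abs_sum_le_sum_abs _ _
      _ ≤ ∑ n ∈ Finset.Icc 1 ⌊t⌋₊, 1 := by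
          refine Finset.sum_le_sum fun n _ => ?_
          rw [abs_pow, abs_neg, abs_one, one_pow]
      _ = (⌊t⌋₊ : ℤ) := by simp
  have h2 : (⌊t⌋₊ : ℝ) ≤ t := Nat.floor_le ht
  calc ‖(S0 t : ℂ)‖ = |(S0 t : ℝ)| := by rw [Complex.norm_intCast]
    _ ≤ ((⌊t⌋₊ : ℤ) : ℝ) := by exact_mod_cast (by exact_mod_cast h1 : |(S0 t : ℝ)| ≤ ((⌊t⌋₊ : ℤ) : ℝ))
    _ ≤ t := by exact_mod_cast h2

lemma S0_meas : Measurable (fun t : ℝ => (S0 t : ℂ)) := by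
  have : (fun t : ℝ => (S0 t : ℂ)) =
      (fun n : ℕ => ((∑ k ∈ Finset.Icc 1 n, (-1 : ℤ) ^ (k - Ω k) : ℤ) : ℂ)) ∘
        (Nat.floor : ℝ → ℕ) := by
    ext t; simp [S0, Function.comp]
  rw [this]
  exact measurable_from_top.comp Nat.measurable_floor

lemma integrable_part (hs : 1 < s.re) :
    IntegrableOn (fun t : ℝ => (S0 t : ℂ) * (t : ℂ) ^ (-s - 1)) (Set.Ioi 1) := by
  have hbound : IntegrableOn (fun t : ℝ => t ^ (-s.re)) (Set.Ioi 1) :=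
    integrableOn_Ioi_rpow_of_lt (by linarith) one_pos
  refine Integrable.mono' hbound (S0_meas.aestronglyMeasurable.mul (cpow_aesm one_pos)) ?_
  filter_upwards [ae_restrict_mem measurableSet_Ioi] with t ht
  have ht0 : (0 : ℝ) < t := lt_trans one_pos ht
  rw [norm_mul, norm_cpow_eq ht0]
  calc ‖(S0 t : ℂ)‖ * t ^ (-s.re - 1) ≤ t * t ^ (-s.re - 1) := by
        exact mul_le_mul_of_nonneg_right (S0_norm_le ht0.le) (Real.rpow_nonneg ht0.le _)
    _ = t ^ (-s.re) := by
        rw [← Real.rpow_one_add' ht0.le (by intro h; simp at h; linarith)]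
        norm_num

lemma FF_hasSum {t : ℝ} (ht : 1 < t) (hnat : t ∉ Set.range ((↑) : ℕ → ℝ)) :
    HasSum (fun n => FF s n t) ((S0 t : ℂ) * (t : ℂ) ^ (-s - 1)) := by
  have ht0 : (0 : ℝ) < t := lt_trans one_pos ht
  have hfin : ∀ n ∉ Finset.Icc 0 ⌊t⌋₊, FF s n t = 0 := by
    intro n hn
    simp only [Finset.mem_Icc, Nat.zero_le, true_and, not_le] at hn
    have : t < n := lt_of_lt_of_le (Nat.lt_floor_add_one t) (by exact_mod_cast hn)
    exact Set.indicator_of_notMem (by simp [Set.mem_Ioi]; linarith) _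
  have hsum : HasSum (fun n => FF s n t) (∑ n ∈ Finset.Icc 0 ⌊t⌋₊, FF s n t) :=
    hasSum_sum_of_ne_finset_zero hfin
  convert hsum using 1
  have heq : ∀ n ∈ Finset.Icc 0 ⌊t⌋₊, FF s n t = aFun n * (t : ℂ) ^ (-s - 1) := by
    intro n hn
    simp only [Finset.mem_Icc] at hn
    have hle : (n : ℝ) ≤ t := le_trans (by exact_mod_cast hn.2 : (n : ℝ) ≤ (⌊t⌋₊ : ℝ)) (Nat.floor_le ht0.le)
    have hne : (n : ℝ) ≠ t := fun h => hnat ⟨n, h⟩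
    exact Set.indicator_of_mem (by simp [Set.mem_Ioi]; exact lt_of_le_of_ne hle hne) _
  rw [Finset.sum_congr rfl heq, ← Finset.sum_mul]
  congr 1
  have : ∑ n ∈ Finset.Icc 0 ⌊t⌋₊, aFun n = ∑ n ∈ Finset.Icc 1 ⌊t⌋₊, aFun n := by
    refine (Finset.sum_subset (Finset.Icc_subset_Icc (by norm_num) le_rfl) ?_).symm
    intro x hx0 hx
    simp only [Finset.mem_Icc, not_and, not_le] at hx0 hx
    have : x = 0 := by omega
    simp [this, aFun]
  rw [this, S0]
  push_cast
  refine Finset.sum_congr rfl fun n hn => ?_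
  simp only [Finset.mem_Icc] at hn
  rw [aFun]
  rw [if_neg (by omega : ¬ n = 0)]

lemma FF_aesm (n : ℕ) : AEStronglyMeasurable (FF s n) (volume.restrict (Set.Ioi 1)) :=
  (aestronglyMeasurable_const.mul (cpow_aesm one_pos)).indicator measurableSet_Ioi

lemma neg_s_sub_one_re (hs : 1 < s.re) : (-s - 1).re < -1 := by
  simp only [Complex.sub_re, Complex.neg_re, Complex.one_re]
  linarith

lemma FF_integral (hs : 1 < s.re) {n : ℕ} (hn : n ≠ 0) :
    ∫ t in Set.Ioi (1 : ℝ), FF s n t = aFun n * (n : ℂ) ^ (-s) / s := by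
  have hn0 : (0 : ℝ) < n := by
    have := Nat.one_le_iff_ne_zero.mpr hn
    exact_mod_cast this
  have hsup : (1 : ℝ) ⊔ n = n := sup_eq_right.mpr (by exact_mod_cast Nat.one_le_iff_ne_zero.mpr hn)
  rw [show (fun t => FF s n t) = Set.indicator (Set.Ioi ((n : ℝ)))
    (fun t => aFun n * (t : ℂ) ^ (-s - 1)) from rfl]
  rw [setIntegral_indicator measurableSet_Ioi, Set.Ioi_inter_Ioi, hsup,
    MeasureTheory.integral_const_mul, integral_Ioi_cpow_of_lt (neg_s_sub_one_re hs) hn0]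
  rw [show (-s - 1 + 1 : ℂ) = -s by ring]
  push_cast
  rw [mul_div_assoc]
  congr 1
  rw [div_neg, neg_div, neg_neg, Complex.cpow_neg]

lemma FF_lintegral (hs : 1 < s.re) (n : ℕ) :
    ∫⁻ t in Set.Ioi (1 : ℝ), ‖FF s n t‖₊ ≤ ENNReal.ofReal ((n : ℝ) ^ (-s.re) / s.re) := by
  rcases eq_or_ne n 0 with rfl | hn
  · have : ∀ t : ℝ, FF s 0 t = 0 := by
      intro t
      simp [FF, aFun]
    simp only [this, nnnorm_zero, ENNReal.coe_zero, lintegral_const, zero_mul]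
    exact zero_le
  have hn0 : (0 : ℝ) < n := by
    have := Nat.one_le_iff_ne_zero.mpr hn
    exact_mod_cast this
  have hg : IntegrableOn (fun t : ℝ => aFun n * (t : ℂ) ^ (-s - 1)) (Set.Ioi (n : ℝ)) :=
    (integrableOn_Ioi_cpow_of_lt (neg_s_sub_one_re hs) hn0).const_mul _
  have hsub : Set.Ioi ((n : ℝ)) ∩ Set.Ioi 1 = Set.Ioi ((n : ℝ)) := by
    rw [Set.Ioi_inter_Ioi,
      sup_of_le_left (by exact_mod_cast Nat.one_le_iff_ne_zero.mpr hn : (1 : ℝ) ≤ n)]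
  calc ∫⁻ t in Set.Ioi (1 : ℝ), ‖FF s n t‖₊
      = ∫⁻ t in Set.Ioi (1 : ℝ), Set.indicator (Set.Ioi ((n : ℝ)))
          (fun t => (‖aFun n * (t : ℂ) ^ (-s - 1)‖₊ : ENNReal)) t := by
        refine lintegral_congr fun t => ?_
        rw [FF]
        by_cases h : t ∈ Set.Ioi ((n : ℝ))
        · rw [Set.indicator_of_mem h, Set.indicator_of_mem h]
        · rw [Set.indicator_of_notMem h, Set.indicator_of_notMem h]
          simp
    _ = ∫⁻ t in Set.Ioi ((n : ℝ)), ‖aFun n * (t : ℂ) ^ (-s - 1)‖₊ := by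
        rw [lintegral_indicator measurableSet_Ioi, Measure.restrict_restrict measurableSet_Ioi,
          hsub]
    _ = ENNReal.ofReal (∫ t in Set.Ioi ((n : ℝ)), ‖aFun n * (t : ℂ) ^ (-s - 1)‖) :=
        (ofReal_integral_norm_eq_lintegral_enorm hg).symm
    _ = ENNReal.ofReal ((n : ℝ) ^ (-s.re) / s.re) := by
        congr 1
        have : ∀ t ∈ Set.Ioi ((n : ℝ)), ‖aFun n * (t : ℂ) ^ (-s - 1)‖ = t ^ (-s.re - 1) := by
          intro t ht
          rw [norm_mul, aFun_norm_eq hn, one_mul, norm_cpow_eq (lt_trans hn0 ht)]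
        rw [setIntegral_congr_fun measurableSet_Ioi this,
          integral_Ioi_rpow_of_lt (by linarith) hn0]
        rw [show -s.re - 1 + 1 = -s.re by ring]
        rw [div_neg, neg_div, neg_neg]
    _ ≤ ENNReal.ofReal ((n : ℝ) ^ (-s.re) / s.re) := le_rfl

lemma lintegral_sum_ne_top (hs : 1 < s.re) :
    ∑' n : ℕ, ∫⁻ t in Set.Ioi (1 : ℝ), ‖FF s n t‖₊ ≠ ⊤ := by
  have hsum : Summable (fun n : ℕ => (n : ℝ) ^ (-s.re) / s.re) :=
    (Real.summable_nat_rpow.mpr (by linarith)).div_const _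
  have hnn : ∀ n : ℕ, 0 ≤ (n : ℝ) ^ (-s.re) / s.re := fun n => by positivity
  refine ne_top_of_le_ne_top ?_ (ENNReal.tsum_le_tsum fun n => FF_lintegral hs n)
  rw [← ENNReal.ofReal_tsum_of_nonneg hnn hsum]
  exact ENNReal.ofReal_ne_top

lemma integral_eq (hs : 1 < s.re) :
    ∫ t in Set.Ioi (1 : ℝ), (S0 t : ℂ) * (t : ℂ) ^ (-s - 1) = LSeries aFun s / s := by
  have hnull : ∀ᵐ t : ℝ, t ∉ Set.range ((↑) : ℕ → ℝ) := by
    rw [ae_iff]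
    simpa only [not_not, Set.ofPred_mem_eq] using (Set.countable_range ((↑) : ℕ → ℝ)).measure_zero volume
  have h1 : ∫ t in Set.Ioi (1 : ℝ), (S0 t : ℂ) * (t : ℂ) ^ (-s - 1)
      = ∫ t in Set.Ioi (1 : ℝ), ∑' n, FF s n t := by
    refine integral_congr_ae ?_
    filter_upwards [ae_restrict_mem measurableSet_Ioi, ae_restrict_of_ae hnull] with t ht h2
    exact ((FF_hasSum ht h2).tsum_eq).symm
  rw [h1, integral_tsum (fun n => FF_aesm n) (lintegral_sum_ne_top hs)]
  have hterm : ∀ n : ℕ, ∫ t in Set.Ioi (1 : ℝ), FF s n t = LSeries.term aFun s n / s := by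
    intro n
    rcases eq_or_ne n 0 with rfl | hn
    · have : ∀ t : ℝ, FF s 0 t = 0 := fun t => by simp [FF, aFun]
      simp only [this]
      simp [LSeries.term_zero]
    rw [FF_integral hs hn, LSeries.term_of_ne_zero hn, Complex.cpow_neg]
    ring
  rw [tsum_congr hterm, tsum_div_const]
  rfl

theorem S0_mellin_transform (s : ℂ) (hs : 1 < s.re) :
    MeasureTheory.IntegrableOn (fun t : ℝ => (S0 t : ℂ) * (t : ℂ) ^ (-s - 1)) (Set.Ioi 1) ∧
    s * ∫ t in Set.Ioi (1 : ℝ), (S0 t : ℂ) * (t : ℂ) ^ (-s - 1) =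
      -(1 + 2 ^ (1 - s)) * riemannZeta (2 * s) / riemannZeta s := by
  refine ⟨integrable_part hs, ?_⟩
  have hs0 : s ≠ 0 := by
    intro h
    rw [h] at hs
    simp at hs
    linarith
  rw [integral_eq hs, mul_comm, div_mul_cancel₀ _ hs0, LSeries_aFun_eq hs, mul_div_assoc]
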